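/- For m,n ≥ 3, the number of Type II(b) tandem occurrences in the Fibonacci array f_{m,n}, i.e. the number of tuples (i,j,r,l) with r,l ≥ 1, i+2r ≤ F(m), j+2l ≤ F(n) such that f_{m,n}[(i,j+l);(r,l)] = f_{m,n}[(i+r,j);(r,l)], equals R(m)·R(n), where R(k) is the number of square occurrences in the 1D Fibonacci word f_k. -/
import Mathlib


/-- Fibonacci numbers: F(0)=1, F(1)=1, F(n+2)=F(n+1)+F(n). -/
def F : ℕ → ℕ
  | 0 => 1
  | 1 => 1
  | n + 2 => F (n + 1) + F n

/-- Finite Fibonacci words over {a,b} coded as Fin 2 (a=0, b=1). -/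
def fibWord : ℕ → List (Fin 2)
  | 0 => [0]
  | 1 => [1]
  | n + 2 => fibWord (n + 1) ++ fibWord n

/-- The Fibonacci arrays f_{m,n} over {a,b,c,d} coded as Fin 2 × Fin 2,
with a=(0,0), b=(0,1), c=(1,0), d=(1,1); `fibArr m n i j` is the (i,j) entry
(0-indexed, only indices i < F m, j < F n are meaningful). -/
def fibArr : ℕ → ℕ → ℕ → ℕ → Fin 2 × Fin 2
  | 0, 0, _, _ => (0, 0)
  | 0, 1, _, _ => (0, 1)
  | 1, 0, _, _ => (1, 0)
  | 1, 1, _, _ => (1, 1)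
  | 0, n + 2, i, j =>
      if j < F (n + 1) then fibArr 0 (n + 1) i j else fibArr 0 n i (j - F (n + 1))
  | 1, n + 2, i, j =>
      if j < F (n + 1) then fibArr 1 (n + 1) i j else fibArr 1 n i (j - F (n + 1))
  | m + 2, k, i, j =>
      if i < F (m + 1) then fibArr (m + 1) k i j else fibArr m k (i - F (m + 1)) j
  termination_by m n => (m, n)

/-- The r × l subarray of u with top-left entry at (i,j). -/
def subarr (u : ℕ → ℕ → Fin 2 × Fin 2) (i j r l : ℕ) : Fin r × Fin l → Fin 2 × Fin 2 :=
  fun p => u (i + p.1.val) (j + p.2.val)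

/-- Number of square occurrences in a finite word. -/
noncomputable def sqOcc (w : List (Fin 2)) : ℕ :=
  {p : ℕ × ℕ | 1 ≤ p.2 ∧ p.1 + 2 * p.2 ≤ w.length ∧
    ∀ t < p.2, w.getD (p.1 + t) 0 = w.getD (p.1 + p.2 + t) 0}.ncard

/-- R(n): number of square occurrences in f_n. -/
noncomputable def R (n : ℕ) : ℕ := sqOcc (fibWord n)

lemma fibWord_length : ∀ n, (fibWord n).length = F n
  | 0 => rfl
  | 1 => rfl
  | n + 2 => by
      simp [fibWord, F, fibWord_length (n+1), fibWord_length n]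

lemma fibWord_getD_add (n i : ℕ) :
    (fibWord (n+2)).getD i 0 =
      if i < F (n+1) then (fibWord (n+1)).getD i 0 else (fibWord n).getD (i - F (n+1)) 0 := by
  rw [show fibWord (n+2) = fibWord (n+1) ++ fibWord n from rfl]
  split
  · rw [List.getD_append]
    rwa [fibWord_length]
  · rw [List.getD_append_right, fibWord_length]
    rw [fibWord_length]; omega

lemma fibArr_eq : ∀ m n i j, i < F m → j < F n →
    fibArr m n i j = ((fibWord m).getD i 0, (fibWord n).getD j 0)
  | 0, 0, i, j, hi, hj => by
      have : i = 0 ∧ j = 0 := by simp [F] at hi hj; omega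
      obtain ⟨rfl, rfl⟩ := this
      simp [fibArr, fibWord]
  | 0, 1, i, j, hi, hj => by
      have : i = 0 ∧ j = 0 := by simp [F] at hi hj; omega
      obtain ⟨rfl, rfl⟩ := this
      simp [fibArr, fibWord]
  | 1, 0, i, j, hi, hj => by
      have : i = 0 ∧ j = 0 := by simp [F] at hi hj; omega
      obtain ⟨rfl, rfl⟩ := this
      simp [fibArr, fibWord]
  | 1, 1, i, j, hi, hj => by
      have : i = 0 ∧ j = 0 := by simp [F] at hi hj; omega
      obtain ⟨rfl, rfl⟩ := this
      simp [fibArr, fibWord]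
  | 0, n + 2, i, j, hi, hj => by
      have hF : F (n+2) = F (n+1) + F n := rfl
      by_cases h : j < F (n+1)
      · rw [show fibArr 0 (n+2) i j = fibArr 0 (n+1) i j from by rw [fibArr]; simp [h],
          fibWord_getD_add, if_pos h]
        exact fibArr_eq 0 (n+1) i j hi h
      · rw [show fibArr 0 (n+2) i j = fibArr 0 n i (j - F (n+1)) from by rw [fibArr]; simp [h],
          fibWord_getD_add, if_neg h]
        exact fibArr_eq 0 n i (j - F (n+1)) hi (by omega)
  | 1, n + 2, i, j, hi, hj => by
      have hF : F (n+2) = F (n+1) + F n := rfl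
      by_cases h : j < F (n+1)
      · rw [show fibArr 1 (n+2) i j = fibArr 1 (n+1) i j from by rw [fibArr]; simp [h],
          fibWord_getD_add, if_pos h]
        exact fibArr_eq 1 (n+1) i j hi h
      · rw [show fibArr 1 (n+2) i j = fibArr 1 n i (j - F (n+1)) from by rw [fibArr]; simp [h],
          fibWord_getD_add, if_neg h]
        exact fibArr_eq 1 n i (j - F (n+1)) hi (by omega)
  | m + 2, k, i, j, hi, hj => by
      have hF : F (m+2) = F (m+1) + F m := rfl
      by_cases h : i < F (m+1)
      · rw [show fibArr (m+2) k i j = fibArr (m+1) k i j from by rw [fibArr]; simp [h],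
          fibWord_getD_add, if_pos h]
        exact fibArr_eq (m+1) k i j h hj
      · rw [show fibArr (m+2) k i j = fibArr m k (i - F (m+1)) j from by rw [fibArr]; simp [h],
          fibWord_getD_add, if_neg h]
        exact fibArr_eq m k (i - F (m+1)) j (by omega) hj
  termination_by m n => (m, n)

lemma key (m n i j r l : ℕ) (hr : 1 ≤ r) (hl : 1 ≤ l)
    (h1 : i + 2 * r ≤ F m) (h2 : j + 2 * l ≤ F n) :
    (subarr (fibArr m n) i (j + l) r l = subarr (fibArr m n) (i + r) j r l) ↔
    ((∀ t < r, (fibWord m).getD (i + t) 0 = (fibWord m).getD (i + r + t) 0) ∧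
     (∀ t < l, (fibWord n).getD (j + t) 0 = (fibWord n).getD (j + l + t) 0)) := by
  constructor
  · intro h
    constructor
    · intro t ht
      have := congrFun h (⟨t, ht⟩, ⟨0, hl⟩)
      simp only [subarr] at this
      rw [fibArr_eq m n (i + t) (j + l + 0) (by omega) (by omega),
        fibArr_eq m n (i + r + t) (j + 0) (by omega) (by omega)] at this
      exact congrArg Prod.fst this
    · intro t ht
      have := congrFun h (⟨0, hr⟩, ⟨t, ht⟩)
      simp only [subarr] at this
      rw [fibArr_eq m n (i + 0) (j + l + t) (by omega) (by omega),
        fibArr_eq m n (i + r + 0) (j + t) (by omega) (by omega)] at this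
      exact (congrArg Prod.snd this).symm
  · rintro ⟨ha, hb⟩
    funext p
    simp only [subarr]
    rw [fibArr_eq m n (i + p.1.val) (j + l + p.2.val) (by have := p.1.isLt; omega)
        (by have := p.2.isLt; omega),
      fibArr_eq m n (i + r + p.1.val) (j + p.2.val) (by have := p.1.isLt; omega)
        (by have := p.2.isLt; omega)]
    have e1 := ha p.1.val p.1.isLt
    have e2 := hb p.2.val p.2.isLt
    exact Prod.ext e1 e2.symm

def E : ((ℕ × ℕ) × ℕ × ℕ) ≃ (ℕ × ℕ × ℕ × ℕ) where
  toFun q := (q.1.1, q.2.1, q.1.2, q.2.2)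
  invFun t := ((t.1, t.2.2.1), (t.2.1, t.2.2.2))
  left_inv _ := rfl
  right_inv _ := rfl

lemma sq_set_finite (w : List (Fin 2)) :
    {p : ℕ × ℕ | 1 ≤ p.2 ∧ p.1 + 2 * p.2 ≤ w.length ∧
      ∀ t < p.2, w.getD (p.1 + t) 0 = w.getD (p.1 + p.2 + t) 0}.Finite := by
  apply Set.Finite.subset ((Set.finite_Iic w.length).prod (Set.finite_Iic w.length))
  rintro ⟨a, b⟩ ⟨h1, h2, _⟩
  constructor <;> simp only [Set.mem_Iic] <;> omega

/-- For m,n ≥ 3, the number of Type II(b) tandem occurrences in f_{m,n}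
— tuples (i,j,r,l) with r,l ≥ 1, i+2r ≤ F(m), j+2l ≤ F(n) such that
f_{m,n}[(i,j+l);(r,l)] = f_{m,n}[(i+r,j);(r,l)] — equals R(m)·R(n). -/
theorem stmt6 (m n : ℕ) (hm : 3 ≤ m) (hn : 3 ≤ n) :
    {t : ℕ × ℕ × ℕ × ℕ | 1 ≤ t.2.2.1 ∧ 1 ≤ t.2.2.2 ∧
      t.1 + 2 * t.2.2.1 ≤ F m ∧ t.2.1 + 2 * t.2.2.2 ≤ F n ∧
      subarr (fibArr m n) t.1 (t.2.1 + t.2.2.2) t.2.2.1 t.2.2.2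
        = subarr (fibArr m n) (t.1 + t.2.2.1) t.2.1 t.2.2.1 t.2.2.2}.ncard
      = R m * R n := by
  set A : Set (ℕ × ℕ) := {p : ℕ × ℕ | 1 ≤ p.2 ∧ p.1 + 2 * p.2 ≤ (fibWord m).length ∧
    ∀ t < p.2, (fibWord m).getD (p.1 + t) 0 = (fibWord m).getD (p.1 + p.2 + t) 0} with hA
  set B : Set (ℕ × ℕ) := {p : ℕ × ℕ | 1 ≤ p.2 ∧ p.1 + 2 * p.2 ≤ (fibWord n).length ∧
    ∀ t < p.2, (fibWord n).getD (p.1 + t) 0 = (fibWord n).getD (p.1 + p.2 + t) 0} with hB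
  have hset : {t : ℕ × ℕ × ℕ × ℕ | 1 ≤ t.2.2.1 ∧ 1 ≤ t.2.2.2 ∧
      t.1 + 2 * t.2.2.1 ≤ F m ∧ t.2.1 + 2 * t.2.2.2 ≤ F n ∧
      subarr (fibArr m n) t.1 (t.2.1 + t.2.2.2) t.2.2.1 t.2.2.2
        = subarr (fibArr m n) (t.1 + t.2.2.1) t.2.1 t.2.2.1 t.2.2.2} = E '' (A ×ˢ B) := by
    ext ⟨i, j, r, l⟩
    rw [Set.mem_image_equiv]
    show _ ↔ ((i, r), (j, l)) ∈ A ×ˢ B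
    simp only [Set.mem_setOf_eq, Set.mem_prod, hA, hB, fibWord_length]
    constructor
    · rintro ⟨hr, hl, h1, h2, hs⟩
      rw [key m n i j r l hr hl h1 h2] at hs
      exact ⟨⟨hr, h1, hs.1⟩, ⟨hl, h2, hs.2⟩⟩
    · rintro ⟨⟨hr, h1, hs1⟩, ⟨hl, h2, hs2⟩⟩
      exact ⟨hr, hl, h1, h2, (key m n i j r l hr hl h1 h2).2 ⟨hs1, hs2⟩⟩
  rw [hset, Set.ncard_image_of_injective _ E.injective]
  have : (A ×ˢ B).ncard = A.ncard * B.ncard := by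
    rw [← Nat.card_coe_set_eq, ← Nat.card_coe_set_eq, ← Nat.card_coe_set_eq,
      Nat.card_congr (Equiv.Set.prod A B), Nat.card_prod]
  rw [this]
  rfl
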